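/- Suppose B and B' are both bijections from the positive integers onto the set of all even binary partitions satisfying: the first term is the empty partition; for every k, the sum of the k-th term equals the smallest n with k \le b(n); and for every k \ge 2, writing n for the sum of the k-th term, the halved k-th partition equals the \ell-th term, where \ell = k - b(n-2) if n \equiv 0 \pmod 4 and \ell = b(n) + 1 - k if n \equiv 2 \pmod 4. Then B = B'. -/

import Mathlib

/-- A binary partition: a multiset of parts, each a power of two. -/
def IsBinaryPartition (P : Multiset ℕ) : Prop := ∀ p ∈ P, ∃ k : ℕ, p = 2 ^ k

/-- An even binary partition: a multiset of parts, each a power of two that is at least 2. -/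
def IsEvenBinaryPartition (P : Multiset ℕ) : Prop := ∀ p ∈ P, ∃ k : ℕ, 1 ≤ k ∧ p = 2 ^ k

/-- `b n` is the number of binary partitions of `n`. -/
noncomputable def b (n : ℕ) : ℕ :=
  Nat.card {P : Multiset ℕ // P.sum = n ∧ IsBinaryPartition P}

/-- `⌊P/2⌋`: divide each part by 2, then delete all resulting parts equal to 1. -/
def half (P : Multiset ℕ) : Multiset ℕ := (P.map (fun p => p / 2)).filter (fun p => p ≠ 1)

/-- An enumeration (indexed from 1) of the even binary partitions: a bijection from the
positive integers onto the even binary partitions, whose first term is the empty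
partition, whose `k`-th term has sum equal to the smallest `n` with `k ≤ b n`, and
which satisfies the halving recursion. -/
def GoodEnum (B : ℕ → Multiset ℕ) : Prop :=
  (∀ k, 1 ≤ k → IsEvenBinaryPartition (B k)) ∧
  Set.InjOn B {k : ℕ | 1 ≤ k} ∧
  (∀ P : Multiset ℕ, IsEvenBinaryPartition P → ∃ k, 1 ≤ k ∧ B k = P) ∧
  B 1 = 0 ∧
  (∀ k, 1 ≤ k → (B k).sum = sInf {n : ℕ | k ≤ b n}) ∧
  (∀ k, 2 ≤ k →
    ((B k).sum % 4 = 0 → half (B k) = B (k - b ((B k).sum - 2))) ∧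
    ((B k).sum % 4 = 2 → half (B k) = B (b ((B k).sum) + 1 - k)))

/-- Reconstruction: an even binary partition is determined by its half and its sum. -/
lemma ebp_reconstruct {P : Multiset ℕ} (h : IsEvenBinaryPartition P) :
    P = (half P).map (fun x => x * 2) +
      Multiset.replicate (P.sum / 2 - (half P).sum) 2 := by
  classical
  set Q : Multiset ℕ := P.map (fun p => p / 2) with hQ
  have hdvd : ∀ p ∈ P, 2 ∣ p := by
    intro p hp
    obtain ⟨k, hk1, rfl⟩ := h p hp
    exact dvd_pow_self 2 (by omega)
  have hPQ : P = Q.map (fun x => x * 2) := by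
    rw [hQ, Multiset.map_map]
    conv_lhs => rw [← Multiset.map_id P]
    apply Multiset.map_congr rfl
    intro p hp
    simp [Nat.div_mul_cancel (hdvd p hp)]
  have hsplit : Q.filter (fun p => p ≠ 1) + Q.filter (fun p => ¬ p ≠ 1) = Q :=
    Multiset.filter_add_not _ _
  set c : ℕ := (Q.filter (fun p => ¬ p ≠ 1)).card with hc
  have hrep : Q.filter (fun p => ¬ p ≠ 1) = Multiset.replicate c 1 := by
    rw [hc]
    rw [Multiset.eq_replicate_card]
    intro y hy
    have := (Multiset.mem_filter.mp hy).2
    simpa using this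
  have hQsum : Q.sum * 2 = P.sum := by
    rw [hPQ, Multiset.sum_map_mul_right]
    simp
  have hQsum2 : Q.sum = (half P).sum + c := by
    conv_lhs => rw [← hsplit]
    rw [Multiset.sum_add, hrep, Multiset.sum_replicate]
    simp [half, hQ]
  have hc2 : c = P.sum / 2 - (half P).sum := by omega
  calc P = Q.map (fun x => x * 2) := hPQ
    _ = (Q.filter (fun p => p ≠ 1) + Q.filter (fun p => ¬ p ≠ 1)).map (fun x => x * 2) := by
        rw [hsplit]
    _ = (half P).map (fun x => x * 2) + Multiset.replicate (P.sum / 2 - (half P).sum) 2 := by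
        rw [Multiset.map_add, hrep, Multiset.map_replicate, hc2]
        rfl

lemma ebp_half_inj {P P' : Multiset ℕ} (h : IsEvenBinaryPartition P)
    (h' : IsEvenBinaryPartition P') (hs : P.sum = P'.sum) (hh : half P = half P') :
    P = P' := by
  rw [ebp_reconstruct h, ebp_reconstruct h', hh, hs]

lemma ebp_sum_even {P : Multiset ℕ} (h : IsEvenBinaryPartition P) : 2 ∣ P.sum := by
  apply Multiset.dvd_sum
  intro p hp
  obtain ⟨k, hk1, rfl⟩ := h p hp
  exact dvd_pow_self 2 (by omega)

lemma ebp_half_sum_le {P : Multiset ℕ} (h : IsEvenBinaryPartition P) :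
    2 * (half P).sum ≤ P.sum := by
  have h1 : (half P) ≤ P.map (fun p => p / 2) := Multiset.filter_le _ _
  have h2 : (half P).sum ≤ (P.map (fun p => p / 2)).sum := by
    obtain ⟨u, hu⟩ := Multiset.le_iff_exists_add.mp h1
    rw [hu]; simp
  have h3 : (P.map (fun p => p / 2)).sum * 2 = P.sum := by
    have hdvd : ∀ p ∈ P, 2 ∣ p := by
      intro p hp
      obtain ⟨k, hk1, rfl⟩ := h p hp
      exact dvd_pow_self 2 (by omega)
    have : P = (P.map (fun p => p / 2)).map (fun x => x * 2) := by
      rw [Multiset.map_map]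
      conv_lhs => rw [← Multiset.map_id P]
      apply Multiset.map_congr rfl
      intro p hp
      simp [Nat.div_mul_cancel (hdvd p hp)]
    conv_rhs => rw [this]
    rw [Multiset.sum_map_mul_right]; simp
  omega

lemma ebp_sum_zero {P : Multiset ℕ} (h : IsEvenBinaryPartition P) (hs : P.sum = 0) :
    P = 0 := by
  rw [Multiset.sum_eq_zero_iff] at hs
  rcases Multiset.empty_or_exists_mem P with h0 | ⟨p, hp⟩
  · exact h0
  · obtain ⟨k, hk1, rfl⟩ := h p hp
    have := hs _ hp
    have : (0:ℕ) < 2 ^ k := Nat.pow_pos (by norm_num)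
    omega

theorem gray_sequence_unique (B B' : ℕ → Multiset ℕ)
    (hB : GoodEnum B) (hB' : GoodEnum B') :
    ∀ k, 1 ≤ k → B k = B' k := by
  obtain ⟨hB1, hB2, hB3, hB4, hB5, hB6⟩ := hB
  obtain ⟨hB'1, hB'2, hB'3, hB'4, hB'5, hB'6⟩ := hB'
  have key : ∀ n k, 1 ≤ k → (B k).sum = n → B k = B' k := by
    intro n
    induction n using Nat.strong_induction_on with
    | _ n IH =>
      intro k hk hsum
      have hsum' : (B' k).sum = (B k).sum := by rw [hB5 k hk, hB'5 k hk]
      rcases Nat.eq_zero_or_pos n with h0 | hpos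
      · subst h0
        rw [ebp_sum_zero (hB1 k hk) hsum, ebp_sum_zero (hB'1 k hk) (by omega)]
      · have hk2 : 2 ≤ k := by
          by_contra h
          have hk1 : k = 1 := by omega
          rw [hk1, hB4] at hsum
          simp at hsum
          omega
        have heven : 2 ∣ n := hsum ▸ ebp_sum_even (hB1 k hk)
        have hn2 : 2 ≤ n := by omega
        have hne : {m : ℕ | k ≤ b m}.Nonempty := by
          by_contra h
          rw [Set.not_nonempty_iff_eq_empty] at h
          have h5 := hB5 k hk
          rw [h, Nat.sInf_empty] at h5
          omega
        have hmem : k ≤ b n := by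
          have h5 := Nat.sInf_mem hne
          rw [← hB5 k hk, hsum] at h5
          exact h5
        have hnot : ¬ k ≤ b (n - 2) := by
          have hlt : n - 2 < sInf {m : ℕ | k ≤ b m} := by
            rw [← hB5 k hk, hsum]; omega
          have h6 : (n - 2) ∉ {m : ℕ | k ≤ b m} := Nat.notMem_of_lt_sInf hlt
          exact h6
        have hhalf : 2 * (half (B k)).sum ≤ n := hsum ▸ ebp_half_sum_le (hB1 k hk)
        rcases (by omega : n % 4 = 0 ∨ n % 4 = 2) with h4 | h4
        · have hrec := (hB6 k hk2).1 (by rw [hsum]; exact h4)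
          have hrec' := (hB'6 k hk2).1 (by rw [hsum', hsum]; exact h4)
          rw [hsum] at hrec
          rw [hsum', hsum] at hrec'
          set l := k - b (n - 2) with hl
          have hl1 : 1 ≤ l := by omega
          have hlt : (B l).sum < n := by rw [← hrec]; omega
          have hBl := IH _ hlt l hl1 rfl
          refine ebp_half_inj (hB1 k hk) (hB'1 k hk) hsum'.symm ?_
          rw [hrec, hrec', hBl]
        · have hrec := (hB6 k hk2).2 (by rw [hsum]; exact h4)
          have hrec' := (hB'6 k hk2).2 (by rw [hsum', hsum]; exact h4)
          rw [hsum] at hrec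
          rw [hsum', hsum] at hrec'
          set l := b n + 1 - k with hl
          have hl1 : 1 ≤ l := by omega
          have hlt : (B l).sum < n := by rw [← hrec]; omega
          have hBl := IH _ hlt l hl1 rfl
          refine ebp_half_inj (hB1 k hk) (hB'1 k hk) hsum'.symm ?_
          rw [hrec, hrec', hBl]
  intro k hk
  exact key _ k hk rfl
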